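/- Let R be a finite commutative ring, ψ : R → ℂ* a primitive additive character (i.e. its kernel contains no nonzero ideal of R), and 𝔞 ⊆ R an ideal. Then the map R/Ann(𝔞) → Hom(𝔞, ℂ*) sending b + Ann(𝔞) to the character x ↦ ψ(bx) is a group isomorphism, where Ann(𝔞) = {r ∈ R : r𝔞 = 0}. -/

import Mathlib

open Function

/-- Characters into `ℂˣ` are the same as characters into `ℂ`. -/
private noncomputable def addCharUnitsEquiv (α : Type*) [AddCommGroup α] :
    AddChar α ℂˣ ≃ AddChar α ℂ where
  toFun χ := (Units.coeHom ℂ).compAddChar χ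
  invFun χ := AddChar.toMonoidHomEquiv.symm (AddChar.toMonoidHomEquiv χ).toHomUnits
  left_inv χ := by
    ext x
    simp
  right_inv χ := by
    ext x
    simp

private lemma card_addChar_units (α : Type*) [AddCommGroup α] [Finite α] :
    Nat.card (AddChar α ℂˣ) = Nat.card α := by
  have : Fintype α := Fintype.ofFinite α
  calc Nat.card (AddChar α ℂˣ) = Nat.card (AddChar α ℂ) := Nat.card_congr (addCharUnitsEquiv α)
    _ = Nat.card α := by
        rw [Nat.card_eq_fintype_card, Nat.card_eq_fintype_card, AddChar.card_eq]

/-- Let `R` be a finite commutative ring, `ψ` a primitive additive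
character of `R` (its kernel contains no nonzero ideal), and `𝔞 ⊆ R` an ideal.  Then
`b + Ann(𝔞) ↦ (x ↦ ψ(bx))` is a group isomorphism `R/Ann(𝔞) ≅ Hom(𝔞, ℂ*)`. -/
theorem stmt_11 (R : Type*) [CommRing R] [Fintype R] (ψ : AddChar R ℂˣ)
    (hprim : ∀ I : Ideal R, (∀ x ∈ I, ψ x = 1) → I = ⊥)
    (a : Ideal R) :
    ∃ e : Multiplicative (R ⧸ (Submodule.annihilator a)) ≃* AddChar a ℂˣ,
      ∀ (b : R) (x : a),
        (e (Multiplicative.ofAdd (Ideal.Quotient.mk (Submodule.annihilator a) b))) x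
          = ψ (b * (x : R)) := by
  classical
  set A : Ideal R := Submodule.annihilator a with hA
  -- The map sending `b` to the character `x ↦ ψ (b * x)` of `a`.
  let toChar : R → AddChar a ℂˣ := fun b =>
    ψ.compAddMonoidHom ((AddMonoidHom.mulLeft b).comp a.subtype.toAddMonoidHom)
  have toChar_apply : ∀ (b : R) (x : a), toChar b x = ψ (b * (x : R)) := fun b x => rfl
  have toChar_add : ∀ b c : R, toChar (b + c) = toChar b * toChar c := by
    intro b c
    ext x
    simp [toChar_apply, add_mul, AddChar.map_add_eq_mul]
  -- `toChar b = 1` iff `b ∈ A`.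
  have toChar_eq_one : ∀ b : R, toChar b = 1 ↔ b ∈ A := by
    intro b
    constructor
    · intro h
      have h' : ∀ x ∈ a, ψ (b * x) = 1 := by
        intro x hx
        simpa [toChar_apply] using DFunLike.congr_fun h ⟨x, hx⟩
      have hI : Submodule.map (LinearMap.mul R R b) a = ⊥ := by
        apply hprim
        intro y hy
        obtain ⟨x, hx, rfl⟩ := hy
        exact h' x hx
      rw [hA, Submodule.mem_annihilator]
      intro x hx
      have : (LinearMap.mul R R b) x ∈ (⊥ : Ideal R) := by
        rw [← hI]; exact Submodule.mem_map_of_mem hx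
      simpa using this
    · intro hb
      ext x
      have : b * (x : R) = 0 := by
        have := Submodule.mem_annihilator.mp hb (x : R) x.2
        simpa using this
      simp [toChar_apply, this]
  have toChar_congr : ∀ b c : R, b - c ∈ A → toChar b = toChar c := by
    intro b c hm
    ext x
    have h0 : (b - c) * (x : R) = 0 := by
      have := Submodule.mem_annihilator.mp hm (x : R) x.2
      simpa using this
    have hb : b * (x : R) = (b - c) * (x : R) + c * (x : R) := by ring
    rw [toChar_apply, toChar_apply, hb, AddChar.map_add_eq_mul, h0]
    simp
  -- lift to the quotient
  let gfun : R ⧸ A → AddChar a ℂˣ := fun q =>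
    Quotient.liftOn' q toChar (fun b c h => toChar_congr b c ((Submodule.quotientRel_def A).mp h))
  have gfun_mk : ∀ b : R, gfun (Submodule.Quotient.mk b) = toChar b := fun b => rfl
  let g : Multiplicative (R ⧸ A) →* AddChar a ℂˣ :=
    { toFun := fun q => gfun q.toAdd
      map_one' := by
        show toChar 0 = 1
        exact (toChar_eq_one 0).mpr (zero_mem A)
      map_mul' := by
        intro q q'
        obtain ⟨b, rfl⟩ := Submodule.Quotient.mk_surjective A q.toAdd
        obtain ⟨c, rfl⟩ := Submodule.Quotient.mk_surjective A q'.toAdd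
        show gfun (Submodule.Quotient.mk b + Submodule.Quotient.mk c) = _
        rw [← Submodule.Quotient.mk_add, gfun_mk, toChar_add]
        rfl }
  have hginj : Injective g := by
    intro q q' h
    obtain ⟨b, hb⟩ := Submodule.Quotient.mk_surjective A q.toAdd
    obtain ⟨c, hc⟩ := Submodule.Quotient.mk_surjective A q'.toAdd
    have hg : toChar b = toChar c := by
      simp [g, ← hb, ← hc, gfun_mk] at h
      exact h
    have h1 : toChar (b - c) = 1 := by
      ext x
      have hbx : ψ (b * (x : R)) = ψ (c * (x : R)) := by
        have := DFunLike.congr_fun hg x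
        simpa [toChar_apply] using this
      have hsum : ψ ((b - c) * (x : R)) * ψ (c * (x : R)) = ψ (c * (x : R)) := by
        rw [← AddChar.map_add_eq_mul, ← hbx]
        congr 1
        ring
      have : ψ ((b - c) * (x : R)) * ψ (c * (x : R)) = 1 * ψ (c * (x : R)) := by
        rw [hsum, one_mul]
      simpa [toChar_apply] using mul_right_cancel this
    have hq : Submodule.Quotient.mk (p := A) b = Submodule.Quotient.mk c :=
      (Submodule.Quotient.eq A).mpr ((toChar_eq_one _).mp h1)
    have : q.toAdd = q'.toAdd := by rw [← hb, ← hc, hq]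
    exact Multiplicative.toAdd.injective this
  -- an injection `a → AddChar (R ⧸ A) ℂˣ` giving the reverse cardinality bound
  have hanncongr : ∀ (x : R) (_ : x ∈ a) (b c : R), b - c ∈ A →
      ψ (b * x) = ψ (c * x) := by
    intro x hx b c hm
    have h0 : (b - c) * x = 0 := by
      have := Submodule.mem_annihilator.mp hm x hx
      simpa using this
    have : b * x = (b - c) * x + c * x := by ring
    rw [this, AddChar.map_add_eq_mul, h0]
    simp
  let φ : a → AddChar (R ⧸ A) ℂˣ := fun x =>
    { toFun := fun q => Quotient.liftOn' q (fun b => ψ (b * (x : R)))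
        (fun b c h => hanncongr x x.2 b c ((Submodule.quotientRel_def A).mp h))
      map_zero_eq_one' := by
        show ψ (0 * (x : R)) = 1
        simp
      map_add_eq_mul' := by
        intro q q'
        obtain ⟨b, rfl⟩ := Submodule.Quotient.mk_surjective A q
        obtain ⟨c, rfl⟩ := Submodule.Quotient.mk_surjective A q'
        show ψ ((b + c) * (x : R)) = ψ (b * (x : R)) * ψ (c * (x : R))
        rw [add_mul, AddChar.map_add_eq_mul] }
  have hφinj : Injective φ := by
    intro x y h
    have h' : ∀ b : R, ψ (b * (x : R)) = ψ (b * (y : R)) := by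
      intro b
      exact DFunLike.congr_fun h (Submodule.Quotient.mk b)
    have hspan : Ideal.span {(x : R) - (y : R)} = ⊥ := by
      apply hprim
      intro z hz
      obtain ⟨c, rfl⟩ := Ideal.mem_span_singleton'.mp hz
      have h1 : ψ (c * (x : R)) = ψ (c * (y : R)) := h' c
      have h2 : ψ (c * ((x : R) - (y : R))) * ψ (c * (y : R)) = ψ (c * (y : R)) := by
        rw [← AddChar.map_add_eq_mul, ← h1]
        congr 1
        ring
      have h3 : ψ (c * ((x : R) - (y : R))) * ψ (c * (y : R)) = 1 * ψ (c * (y : R)) := by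
        rw [h2, one_mul]
      exact mul_right_cancel h3
    have hxy : (x : R) - (y : R) = 0 := by
      have := Ideal.mem_span_singleton_self ((x : R) - (y : R))
      rw [hspan] at this
      simpa using this
    exact Subtype.ext (sub_eq_zero.mp hxy)
  -- cardinalities
  have hfin1 : Finite (AddChar a ℂˣ) := Finite.of_equiv _ (addCharUnitsEquiv _).symm
  have hfin2 : Finite (AddChar (R ⧸ A) ℂˣ) := Finite.of_equiv _ (addCharUnitsEquiv _).symm
  have hcard : Nat.card (Multiplicative (R ⧸ A)) = Nat.card (AddChar a ℂˣ) := by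
    have h1 : Nat.card (AddChar a ℂˣ) = Nat.card a := card_addChar_units a
    have h2 : Nat.card (AddChar (R ⧸ A) ℂˣ) = Nat.card (R ⧸ A) := card_addChar_units (R ⧸ A)
    have hle1 : Nat.card (Multiplicative (R ⧸ A)) ≤ Nat.card (AddChar a ℂˣ) :=
      Nat.card_le_card_of_injective g hginj
    have hle2 : Nat.card a ≤ Nat.card (R ⧸ A) := by
      calc Nat.card a ≤ Nat.card (AddChar (R ⧸ A) ℂˣ) := Nat.card_le_card_of_injective φ hφinj
        _ = Nat.card (R ⧸ A) := h2
    have h3 : Nat.card (Multiplicative (R ⧸ A)) = Nat.card (R ⧸ A) := rfl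
    omega
  have hbij : Bijective g :=
    (Nat.bijective_iff_injective_and_card g).mpr ⟨hginj, hcard⟩
  refine ⟨MulEquiv.ofBijective g hbij, ?_⟩
  intro b x
  rfl
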